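/- Diameter of the exterior component near a boundary point: let Ω ⊂ ℝ^N be a bounded domain with connected boundary ∂Ω, let x ∈ ∂Ω, let δ > 0, and let K be the connected component of cl(Ω^c) ∩ cl(B_δ(x)) containing x. Then diam(K) ≥ δ. -/

import Mathlib

open MeasureTheory Metric Set

theorem exterior_component_diameter (N : ℕ) (Ω : Set (EuclideanSpace ℝ (Fin N)))
    (hΩo : IsOpen Ω) (hΩc : IsConnected Ω) (hΩb : Bornology.IsBounded Ω)
    (hbd : IsConnected (frontier Ω))
    (x : EuclideanSpace ℝ (Fin N)) (hx : x ∈ frontier Ω) (δ : ℝ) (hδ : 0 < δ) :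
    δ ≤ Metric.diam (connectedComponentIn (closure Ωᶜ ∩ closure (Metric.ball x δ)) x) := by
  -- Dispose of the degenerate case N = 0.
  rcases Nat.eq_zero_or_pos N with hN | hN
  · subst hN
    haveI : Subsingleton (EuclideanSpace ℝ (Fin 0)) :=
      ⟨fun a b => PiLp.ext fun i => i.elim0⟩
    obtain ⟨w, hw⟩ := hΩc.nonempty
    have hΩu : Ω = univ := eq_univ_of_forall fun y => Subsingleton.elim y w ▸ hw
    rw [hΩu, frontier_univ] at hx
    exact absurd hx (notMem_empty x)
  -- Basic facts.
  have hFc : IsClosed Ωᶜ := hΩo.isClosed_compl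
  have hclF : closure Ωᶜ = Ωᶜ := hFc.closure_eq
  have hfrsub : frontier Ω ⊆ Ωᶜ := fun z hz => (hΩo.frontier_eq ▸ hz).2
  have hxF : x ∈ Ωᶜ := hfrsub hx
  -- Step 1 : the complement of Ω is preconnected.
  -- First, every connected component of Ωᶜ meets the frontier, hence contains it.
  have key : ∀ y ∈ Ωᶜ, frontier Ω ⊆ connectedComponentIn Ωᶜ y := by
    intro y hy
    set C := connectedComponentIn Ωᶜ y with hC
    have hCsub : C ⊆ Ωᶜ := connectedComponentIn_subset _ _
    have hyC : y ∈ C := mem_connectedComponentIn hy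
    have hCconn : IsPreconnected C := isPreconnected_connectedComponentIn
    have hCclosed : IsClosed C := by
      refine isClosed_of_closure_subset ?_
      refine IsPreconnected.subset_connectedComponentIn hCconn.closure (subset_closure hyC) ?_
      rw [← hclF]; exact closure_mono hCsub
    have hmeet : (C ∩ frontier Ω).Nonempty := by
      by_contra h
      rw [not_nonempty_iff_eq_empty] at h
      have hsub : C ⊆ interior Ωᶜ := by
        intro z hz
        have hzc : z ∈ Ωᶜ := hCsub hz
        by_contra hzint
        have hzfr : z ∈ frontier Ωᶜ := by
          rw [hFc.frontier_eq]
          exact ⟨hzc, hzint⟩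
        rw [frontier_compl] at hzfr
        have hzm : z ∈ C ∩ frontier Ω := ⟨hz, hzfr⟩
        rw [h] at hzm
        exact hzm
      have hCopen : IsOpen C := by
        have h1 : C ⊆ connectedComponentIn (interior Ωᶜ) y :=
          IsPreconnected.subset_connectedComponentIn hCconn hyC hsub
        have h2 : connectedComponentIn (interior Ωᶜ) y ⊆ C :=
          IsPreconnected.subset_connectedComponentIn isPreconnected_connectedComponentIn
            (mem_connectedComponentIn (hsub hyC))
            ((connectedComponentIn_subset _ _).trans interior_subset)
        rw [subset_antisymm h1 h2]
        exact isOpen_interior.connectedComponentIn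
      have hCuniv : C = univ := IsClopen.eq_univ ⟨hCclosed, hCopen⟩ ⟨y, hyC⟩
      obtain ⟨w, hw⟩ := hΩc.nonempty
      exact (hCsub (hCuniv ▸ mem_univ w)) hw
    obtain ⟨z, hzC, hzfr⟩ := hmeet
    have hun : IsPreconnected (C ∪ frontier Ω) :=
      hCconn.union z hzC hzfr hbd.isPreconnected
    intro w hw
    exact IsPreconnected.subset_connectedComponentIn hun (Or.inl hyC)
      (union_subset hCsub hfrsub) (Or.inr hw)
  have hFpre : IsPreconnected Ωᶜ := by
    have hFeq : Ωᶜ = connectedComponentIn Ωᶜ x := by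
      refine subset_antisymm (fun y hy => ?_) (connectedComponentIn_subset _ _)
      obtain ⟨z, hz⟩ := hbd.nonempty
      have h1 : z ∈ connectedComponentIn Ωᶜ y := key y hy hz
      have h2 : z ∈ connectedComponentIn Ωᶜ x := key x hxF hz
      have hun : IsPreconnected (connectedComponentIn Ωᶜ y ∪ connectedComponentIn Ωᶜ x) :=
        isPreconnected_connectedComponentIn.union z h1 h2 isPreconnected_connectedComponentIn
      have := IsPreconnected.subset_connectedComponentIn hun
        (Or.inr (mem_connectedComponentIn hxF))
        (union_subset (connectedComponentIn_subset _ _) (connectedComponentIn_subset _ _))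
      exact this (Or.inl (mem_connectedComponentIn hy))
    rw [hFeq]
    exact isPreconnected_connectedComponentIn
  -- Step 2: the boundary bumping argument.
  rw [hclF, closure_ball x hδ.ne']
  set M : Set (EuclideanSpace ℝ (Fin N)) := Ωᶜ ∩ closedBall x δ with hM
  have hxM : x ∈ M := ⟨hxF, mem_closedBall_self hδ.le⟩
  have hMcomp : IsCompact M := (isCompact_closedBall x δ).inter_left hFc
  set K := connectedComponentIn M x with hK
  have hKbdd : Bornology.IsBounded K :=
    (isBounded_closedBall).subset
      ((connectedComponentIn_subset _ _).trans inter_subset_right)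
  -- It suffices to find a point of K on the sphere.
  have hKs : (K ∩ sphere x δ).Nonempty := by
    by_contra hKs
    rw [not_nonempty_iff_eq_empty] at hKs
    haveI : CompactSpace M := isCompact_iff_compactSpace.mp hMcomp
    have hKim : K = Subtype.val '' connectedComponent (⟨x, hxM⟩ : M) :=
      connectedComponentIn_eq_image hxM
    set S : Set M := Subtype.val ⁻¹' sphere x δ with hS
    have hScomp : IsCompact S :=
      (isClosed_sphere.preimage continuous_subtype_val).isCompact
    have hdisj : S ∩ ⋂ s : { s : Set M // IsClopen s ∧ (⟨x, hxM⟩ : M) ∈ s }, (s : Set M) = ∅ := by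
      rw [← connectedComponent_eq_iInter_isClopen]
      ext z
      simp only [mem_inter_iff, mem_empty_iff_false, iff_false, not_and]
      intro hzS hzc
      have : (z : EuclideanSpace ℝ (Fin N)) ∈ K ∩ sphere x δ :=
        ⟨hKim ▸ mem_image_of_mem _ hzc, hzS⟩
      rw [hKs] at this
      exact absurd this (notMem_empty _)
    rw [inter_comm] at hdisj
    obtain ⟨u, hu⟩ := hScomp.elim_finite_subfamily_closed _
      (fun s : { s : Set M // IsClopen s ∧ (⟨x, hxM⟩ : M) ∈ s } => s.2.1.1)
      (by rwa [inter_comm] at hdisj)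
    set Z : Set M := ⋂ i ∈ u, (i : Set M) with hZ
    have hZclopen : IsClopen Z := isClopen_biInter_finset fun s _ => s.2.1
    have hxZ : (⟨x, hxM⟩ : M) ∈ Z := mem_iInter₂.2 fun s _ => s.2.2
    have hZS : Z ∩ S = ∅ := by rwa [inter_comm] at hu
    set U : Set (EuclideanSpace ℝ (Fin N)) := Subtype.val '' Z with hU
    have hxU : x ∈ U := mem_image_of_mem _ hxZ
    have hUM : U ⊆ M := by rintro z ⟨w, _, rfl⟩; exact w.2
    have hUclosed : IsClosed U :=
      (hZclopen.1.isCompact.image continuous_subtype_val).isClosed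
    have hUsphere : U ∩ sphere x δ = ∅ := by
      ext z
      simp only [mem_inter_iff, mem_empty_iff_false, iff_false, not_and]
      rintro ⟨w, hwZ, rfl⟩ hzs
      have : w ∈ Z ∩ S := ⟨hwZ, hzs⟩
      rw [hZS] at this
      exact absurd this (notMem_empty _)
    have hUball : U ⊆ ball x δ := by
      intro z hz
      have h1 : z ∈ closedBall x δ := (hUM hz).2
      rcases lt_or_eq_of_le (mem_closedBall.mp h1) with h | h
      · exact h
      · exfalso
        have : z ∈ U ∩ sphere x δ := ⟨hz, mem_sphere.mpr h⟩
        rw [hUsphere] at this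
        exact absurd this (notMem_empty _)
    obtain ⟨W, hWo, hZW⟩ := isOpen_induced_iff.mp hZclopen.2
    have hUeq : U = Ωᶜ ∩ (W ∩ ball x δ) := by
      apply subset_antisymm
      · intro z hz
        obtain ⟨w, hwZ, rfl⟩ := hz
        have hwW : (w : EuclideanSpace ℝ (Fin N)) ∈ W := by
          rw [← hZW] at hwZ; exact hwZ
        exact ⟨w.2.1, hwW, hUball (mem_image_of_mem _ hwZ)⟩
      · rintro z ⟨hz1, hz2, hz3⟩
        have hzM : z ∈ M := ⟨hz1, ball_subset_closedBall hz3⟩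
        refine ⟨⟨z, hzM⟩, ?_, rfl⟩
        rw [← hZW]
        exact hz2
    -- Build the separation of Ωᶜ.
    obtain ⟨R, hR⟩ := hΩb.subset_closedBall x
    set r : ℝ := max R δ + 1 with hr
    have hrpos : 0 < r := lt_of_lt_of_le hδ (le_trans (le_max_right R δ) (by linarith))
    set y : EuclideanSpace ℝ (Fin N) :=
      x + r • EuclideanSpace.single (⟨0, hN⟩ : Fin N) (1 : ℝ) with hy
    have hdyx : dist y x = r := by
      rw [hy, dist_self_add_left, norm_smul, EuclideanSpace.norm_single]
      simp [abs_of_pos hrpos]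
    have hyF : y ∈ Ωᶜ := by
      intro hyΩ
      have := hR hyΩ
      rw [mem_closedBall, hdyx] at this
      have : R < r := lt_of_le_of_lt (le_max_left R δ) (by linarith)
      linarith [hR hyΩ, (mem_closedBall.mp (hR hyΩ)), hdyx]
    have hyU : y ∉ U := by
      intro hyU
      have := hUball hyU
      rw [mem_ball, hdyx] at this
      have : δ ≤ max R δ := le_max_right R δ
      linarith
    have hsep := hFpre (W ∩ ball x δ) Uᶜ (hWo.inter isOpen_ball) hUclosed.isOpen_compl
      (by
        intro z hz
        by_cases hzU : z ∈ U
        · left; exact (hUeq ▸ hzU).2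
        · right; exact hzU)
      ⟨x, hxF, (hUeq ▸ hxU).2⟩
      ⟨y, hyF, hyU⟩
    obtain ⟨z, hz1, hz2, hz3⟩ := hsep
    exact hz3 (hUeq ▸ ⟨hz1, hz2⟩)
  obtain ⟨z, hzK, hzs⟩ := hKs
  have : dist z x = δ := mem_sphere.mp hzs
  calc δ = dist z x := this.symm
    _ ≤ Metric.diam K := dist_le_diam_of_mem hKbdd hzK (mem_connectedComponentIn hxM)
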